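/- Let n ≥ 3 and let α ∈ A_{n+1} be a pure strongly alternative element. Then α = λ·ẽ_0 for some λ ∈ ℝ. -/

import Mathlib

noncomputable section

open scoped Quaternion

/-- The Cayley–Dickson algebra `A n = ℝ^(2^n)` as a type. -/
def CD : ℕ → Type
  | 0 => ℝ
  | n + 1 => CD n × CD n

namespace CD

instance instAddCommGroup : (n : ℕ) → AddCommGroup (CD n)
  | 0 => inferInstanceAs (AddCommGroup ℝ)
  | n + 1 =>
    letI := instAddCommGroup n
    inferInstanceAs (AddCommGroup (CD n × CD n))

instance instModule : (n : ℕ) → Module ℝ (CD n)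
  | 0 => inferInstanceAs (Module ℝ ℝ)
  | n + 1 =>
    letI := instModule n
    inferInstanceAs (Module ℝ (CD n × CD n))

/-- Conjugation in the Cayley–Dickson algebra. -/
def conj : {n : ℕ} → CD n → CD n
  | 0, x => x
  | _ + 1, x => (conj x.1, -x.2)

/-- Cayley–Dickson multiplication. -/
def mul : {n : ℕ} → CD n → CD n → CD n
  | 0, x, y => Mul.mul (α := ℝ) x y
  | _ + 1, x, y =>
    (mul x.1 y.1 - mul (conj y.2) x.2, mul y.2 x.1 + mul x.2 (conj y.1))

instance instMul (n : ℕ) : Mul (CD n) := ⟨mul⟩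

/-- The multiplicative unit `e₀`. -/
def one : {n : ℕ} → CD n
  | 0 => (1 : ℝ)
  | _ + 1 => (one, 0)

instance instOne (n : ℕ) : One (CD n) := ⟨one⟩

/-- The Euclidean inner product on `A n = ℝ^(2^n)`. -/
def inner : {n : ℕ} → CD n → CD n → ℝ
  | 0, x, y => (x * y : ℝ)
  | _ + 1, x, y => inner x.1 y.1 + inner x.2 y.2

/-- The Euclidean norm on `A n = ℝ^(2^n)`. -/
def norm {n : ℕ} (x : CD n) : ℝ := Real.sqrt (inner x x)

/-- `ã = (-a₂, a₁)`. -/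
def tilde {n : ℕ} (a : CD (n + 1)) : CD (n + 1) := (-a.2, a.1)

/-- `ẽ₀ = (0, e₀)`. -/
def etilde (n : ℕ) : CD (n + 1) := ((0 : CD n), (1 : CD n))

/-- An element is pure if its conjugate is its negative. -/
def IsPure {n : ℕ} (a : CD n) : Prop := conj a = -a

/-- An element of `A (n+1)` is doubly pure if both of its coordinates are pure. -/
def IsDoublyPure {n : ℕ} (a : CD (n + 1)) : Prop := IsPure a.1 ∧ IsPure a.2

/-- The associator `(a,b,c) = (ab)c - a(bc)`. -/
def assoc {n : ℕ} (a b c : CD n) : CD n := a * b * c - a * (b * c)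

/-- An element is alternative if `(a,a,x) = 0` for all `x`. -/
def IsAlternative {n : ℕ} (a : CD n) : Prop := ∀ x : CD n, assoc a a x = 0

/-- An element is strongly alternative if `(a,a,x) = 0` and `(a,x,x) = 0` for all `x`. -/
def IsStronglyAlternative {n : ℕ} (a : CD n) : Prop :=
  (∀ x : CD n, assoc a a x = 0) ∧ (∀ x : CD n, assoc a x x = 0)

/-- The pure (imaginary) part of an element. -/
def im {n : ℕ} (a : CD n) : CD n := (2⁻¹ : ℝ) • (a - conj a)

/-- `H a`, the span of `{e₀, ã, a, ẽ₀}`. -/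
def H {n : ℕ} (a : CD (n + 1)) : Submodule ℝ (CD (n + 1)) :=
  Submodule.span ℝ {(1 : CD (n + 1)), tilde a, a, etilde n}

/-- The orthogonal complement of `H a`. -/
def Hperp {n : ℕ} (a : CD (n + 1)) : Set (CD (n + 1)) :=
  {x | ∀ y ∈ H a, inner y x = 0}

end CD

namespace CD
variable {n : ℕ}

lemma mul_def (x y : CD (n+1)) : x * y = (x.1*y.1 - conj y.2 * x.2, y.2*x.1 + x.2 * conj y.1) := rfl
lemma add_def (x y : CD (n+1)) : x + y = (x.1 + y.1, x.2 + y.2) := rfl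
lemma neg_def (x : CD (n+1)) : -x = (-x.1, -x.2) := rfl
lemma sub_def (x y : CD (n+1)) : x - y = (x.1 - y.1, x.2 - y.2) := rfl
lemma smul_def (r : ℝ) (x : CD (n+1)) : r • x = (r • x.1, r • x.2) := rfl
lemma zero_def : (0 : CD (n+1)) = ((0 : CD n), (0 : CD n)) := rfl
lemma one_def : (1 : CD (n+1)) = ((1 : CD n), (0 : CD n)) := rfl
lemma conj_def (x : CD (n+1)) : conj x = (conj x.1, -x.2) := rfl
lemma eta (x : CD (n+1)) : x = (x.1, x.2) := rfl
lemma mk_eq_mk {a b c d : CD n} : @Eq (CD (n+1)) (a, b) (c, d) ↔ a = c ∧ b = d :=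
  ⟨fun h => ⟨congrArg Prod.fst h, congrArg Prod.snd h⟩, fun h => by rw [h.1, h.2]⟩
end CD
namespace CD

lemma conj_zero' : ∀ n, conj (0 : CD n) = 0
  | 0 => rfl
  | n + 1 => by simp [↓conj_def, ↓zero_def, conj_zero' n] <;> rfl

lemma zero_mul_and_mul_zero : ∀ n, (∀ x : CD n, 0 * x = 0) ∧ (∀ x : CD n, x * 0 = 0)
  | 0 => ⟨fun x => zero_mul (M₀ := ℝ) x,
          fun x => mul_zero (M₀ := ℝ) x⟩
  | n + 1 => by
    obtain ⟨hz, hm⟩ := zero_mul_and_mul_zero n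
    constructor <;> intro x <;>
      simp [↓mul_def, ↓zero_def, conj_zero' n, hz, hm] <;> rfl

lemma zero_mul' {n} (x : CD n) : 0 * x = 0 := (zero_mul_and_mul_zero n).1 x
lemma mul_zero' {n} (x : CD n) : x * 0 = 0 := (zero_mul_and_mul_zero n).2 x

lemma conj_one' : ∀ n, conj (1 : CD n) = 1
  | 0 => rfl
  | n + 1 => by simp [↓conj_def, ↓one_def, conj_one' n] <;> rfl

lemma conj_add' : ∀ n (x y : CD n), conj (x + y) = conj x + conj y
  | 0, x, y => rfl
  | n + 1, x, y => by
    simp [↓conj_def, ↓add_def, conj_add' n]; abel_nf <;> rfl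

lemma conj_neg' : ∀ n (x : CD n), conj (-x) = -conj x
  | 0, x => rfl
  | n + 1, x => by simp [↓conj_def, ↓neg_def, conj_neg' n] <;> rfl

lemma conj_sub' {n} (x y : CD n) : conj (x - y) = conj x - conj y := by
  rw [sub_eq_add_neg, conj_add', conj_neg', sub_eq_add_neg]

lemma conj_smul' : ∀ n (r : ℝ) (x : CD n), conj (r • x) = r • conj x
  | 0, r, x => rfl
  | n + 1, r, x => by simp [↓conj_def, ↓smul_def, conj_smul' n] <;> rfl

lemma conj_conj' : ∀ n (x : CD n), conj (conj x) = x
  | 0, x => rfl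
  | n + 1, x => by simp [↓conj_def, conj_conj' n] <;> rfl

end CD
namespace CD

def toR (x : CD 0) : ℝ := x

lemma one_mul_and_mul_one : ∀ n, (∀ x : CD n, 1 * x = x) ∧ (∀ x : CD n, x * 1 = x)
  | 0 => ⟨fun x => one_mul (M := ℝ) (toR x), fun x => mul_one (M := ℝ) (toR x)⟩
  | n + 1 => by
    obtain ⟨h1, h2⟩ := one_mul_and_mul_one n
    constructor <;> intro x <;>
      simp [↓mul_def, ↓one_def, conj_zero' n, conj_one' n, zero_mul', mul_zero', h1, h2] <;> rfl

lemma one_mul' {n} (x : CD n) : 1 * x = x := (one_mul_and_mul_one n).1 x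
lemma mul_one' {n} (x : CD n) : x * 1 = x := (one_mul_and_mul_one n).2 x

lemma add_mul_and_mul_add : ∀ n, (∀ x y z : CD n, (x + y) * z = x * z + y * z) ∧
    (∀ x y z : CD n, x * (y + z) = x * y + x * z)
  | 0 => ⟨fun x y z => add_mul (R := ℝ) (toR x) (toR y) (toR z),
          fun x y z => mul_add (R := ℝ) (toR x) (toR y) (toR z)⟩
  | n + 1 => by
    obtain ⟨ha, hm⟩ := add_mul_and_mul_add n
    constructor <;> intro x y z <;>
      · simp only [↓mul_def, ↓add_def, conj_add' n, ha, hm, mk_eq_mk]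
        constructor <;> abel

lemma add_mul' {n} (x y z : CD n) : (x + y) * z = x * z + y * z := (add_mul_and_mul_add n).1 x y z
lemma mul_add' {n} (x y z : CD n) : x * (y + z) = x * y + x * z := (add_mul_and_mul_add n).2 x y z

lemma neg_mul' {n} (x y : CD n) : (-x) * y = -(x * y) := by
  have h := add_mul' (-x) x y
  rw [neg_add_cancel, zero_mul'] at h
  exact eq_neg_of_add_eq_zero_left h.symm

lemma mul_neg' {n} (x y : CD n) : x * (-y) = -(x * y) := by
  have h := mul_add' x (-y) y
  rw [neg_add_cancel, mul_zero'] at h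
  exact eq_neg_of_add_eq_zero_left h.symm

lemma sub_mul' {n} (x y z : CD n) : (x - y) * z = x * z - y * z := by
  rw [sub_eq_add_neg, add_mul', neg_mul', sub_eq_add_neg]

lemma mul_sub' {n} (x y z : CD n) : x * (y - z) = x * y - x * z := by
  rw [sub_eq_add_neg, mul_add', mul_neg', sub_eq_add_neg]

lemma smul_mul_and_mul_smul : ∀ n, (∀ (r : ℝ) (x y : CD n), (r • x) * y = r • (x * y)) ∧
    (∀ (r : ℝ) (x y : CD n), x * (r • y) = r • (x * y))
  | 0 => ⟨fun r x y => smul_mul_assoc (β := ℝ) r (toR x) (toR y),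
          fun r x y => mul_smul_comm (β := ℝ) r (toR x) (toR y)⟩
  | n + 1 => by
    obtain ⟨hs, hm⟩ := smul_mul_and_mul_smul n
    constructor <;> intro r x y <;>
      · simp [↓mul_def, ↓smul_def, conj_smul' n, hs, hm, mk_eq_mk, smul_sub, smul_add]

lemma smul_mul' {n} (r : ℝ) (x y : CD n) : (r • x) * y = r • (x * y) := (smul_mul_and_mul_smul n).1 r x y
lemma mul_smul'' {n} (r : ℝ) (x y : CD n) : x * (r • y) = r • (x * y) := (smul_mul_and_mul_smul n).2 r x y

lemma conj_mul' : ∀ n (x y : CD n), conj (x * y) = conj y * conj x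
  | 0, x, y => mul_comm (G := ℝ) (toR x) (toR y)
  | n + 1, x, y => by
    simp only [↓mul_def, ↓conj_def, conj_sub', conj_add' n, conj_mul' n, conj_conj' n,
      conj_neg' n, neg_mul', mul_neg', mk_eq_mk]
    constructor <;> abel

lemma one_ne_zero' : ∀ n, (1 : CD n) ≠ 0
  | 0 => fun h => one_ne_zero (α := ℝ) (congrArg toR h)
  | n + 1 => fun h => by
    rw [one_def, zero_def, mk_eq_mk] at h
    exact one_ne_zero' n h.1

lemma exists_real_add_conj : ∀ n (x : CD n), ∃ r : ℝ, x + conj x = r • 1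
  | 0, x => ⟨2 * toR x, by
      have : toR x + toR x = (2 * toR x) • (1:ℝ) := by simp; ring
      exact this⟩
  | n + 1, x => by
    obtain ⟨r, hr⟩ := exists_real_add_conj n x.1
    refine ⟨r, ?_⟩
    simp [↓add_def, ↓conj_def, ↓one_def, ↓smul_def, mk_eq_mk, hr]

end CD
namespace CD

lemma eq_zero_of_eq_neg {n} {x : CD n} (h : x = -x) : x = 0 := by
  have h2 : (2:ℝ) • x = 0 := by rw [two_smul]; nth_rewrite 2 [h]; abel
  have := congrArg (fun y => (2⁻¹:ℝ) • y) h2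
  simpa [smul_smul] using this

lemma smul_one_eq_zero {n} {r : ℝ} (h : r • (1 : CD n) = 0) : r = 0 := by
  by_contra hr
  have := congrArg (fun y => (r⁻¹:ℝ) • y) h
  simp [smul_smul, inv_mul_cancel₀ hr] at this
  exact one_ne_zero' n this

/-- pair constructor with correct CD type -/
def pmk {n} (a b : CD n) : CD (n + 1) := (a, b)

lemma pmk_inj {n} {a b c d : CD n} : pmk a b = pmk c d ↔ a = c ∧ b = d := mk_eq_mk
lemma pmk_eta {n} (x : CD (n+1)) : pmk x.1 x.2 = x := rfl
lemma pmk_mul {n} (a b c d : CD n) :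
    pmk a b * pmk c d = pmk (a * c - conj d * b) (d * a + b * conj c) := rfl
lemma pmk_add {n} (a b c d : CD n) : pmk a b + pmk c d = pmk (a + c) (b + d) := rfl
lemma pmk_neg {n} (a b : CD n) : -pmk a b = pmk (-a) (-b) := rfl
lemma pmk_smul {n} (r : ℝ) (a b : CD n) : r • pmk a b = pmk (r • a) (r • b) := rfl
lemma pmk_conj {n} (a b : CD n) : conj (pmk a b) = pmk (conj a) (-b) := rfl
lemma zero_pmk {n} : (0 : CD (n+1)) = pmk 0 0 := rfl
lemma one_pmk {n} : (1 : CD (n+1)) = pmk 1 0 := rfl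

/-- imaginary basis unit from level 1 -/
def e1 : (n : ℕ) → CD (n + 1)
  | 0 => pmk (0 : CD 0) 1
  | n + 1 => pmk (e1 n) 0

lemma e1_zero : e1 0 = pmk (0 : CD 0) 1 := rfl
lemma e1_succ (n : ℕ) : e1 (n+1) = pmk (e1 n) 0 := rfl

lemma conj_e1 : ∀ n, conj (e1 n) = -e1 n
  | 0 => by
    rw [e1_zero, pmk_conj, pmk_neg, pmk_inj]
    exact ⟨(conj_zero' 0).trans neg_zero.symm, rfl⟩
  | n + 1 => by
    rw [e1_succ, pmk_conj, pmk_neg, pmk_inj]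
    exact ⟨conj_e1 n, rfl⟩

lemma mul_e1_e1 : ∀ n (x : CD (n + 1)), (x * e1 n) * e1 n = -x
  | 0, x => by
    rw [← pmk_eta x, e1_zero, pmk_mul, pmk_mul, pmk_neg, pmk_inj]
    constructor <;>
      simp [conj_one' 0, conj_zero' 0, mul_zero', zero_mul', one_mul', mul_one', mul_add',
        add_mul']
  | n + 1, x => by
    rw [← pmk_eta x, e1_succ, pmk_mul, pmk_mul, pmk_neg, pmk_inj, conj_e1 n, conj_zero']
    constructor
    · simp only [mul_zero', zero_mul', sub_zero, mul_neg', neg_mul', neg_neg, mul_e1_e1 n]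
    · simp only [mul_zero', zero_mul', zero_add, add_zero, mul_neg', neg_mul', neg_neg,
        mul_e1_e1 n]

lemma eq_zero_of_mul_e1 {n} {x : CD (n+1)} (h : x * e1 n = 0) : x = 0 := by
  have := mul_e1_e1 n x
  rw [h, zero_mul'] at this
  rw [← neg_neg x, ← this, neg_zero]

/-- imaginary basis unit from level 2 -/
def e2 : (n : ℕ) → CD (n + 2)
  | 0 => pmk (0 : CD 1) 1
  | n + 1 => pmk (e2 n) 0

lemma e2_zero : e2 0 = pmk (0 : CD 1) 1 := rfl
lemma e2_succ (n : ℕ) : e2 (n+1) = pmk (e2 n) 0 := rfl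

lemma conj_e2 : ∀ n, conj (e2 n) = -e2 n
  | 0 => by
    rw [e2_zero, pmk_conj, pmk_neg, pmk_inj]
    exact ⟨(conj_zero' 1).trans neg_zero.symm, rfl⟩
  | n + 1 => by
    rw [e2_succ, pmk_conj, pmk_neg, pmk_inj]
    exact ⟨conj_e2 n, rfl⟩

lemma e1_ne_zero : ∀ n, e1 n ≠ 0
  | 0 => fun h => one_ne_zero' 0 (congrArg Prod.snd h)
  | n + 1 => fun h => e1_ne_zero n (congrArg Prod.fst h)

lemma noncomm : ∀ n, e1 (n+1) * e2 n ≠ e2 n * e1 (n+1)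
  | 0 => by
    have h1 : e1 1 * e2 0 = pmk 0 (e1 0) := by
      rw [e1_succ, e2_zero, pmk_mul, pmk_inj]
      constructor
      · simp [conj_one' _, mul_zero', zero_mul']
      · simp [conj_zero' _, mul_zero', zero_mul', one_mul']
    have h2 : e2 0 * e1 1 = pmk 0 (-e1 0) := by
      rw [e1_succ, e2_zero, pmk_mul, pmk_inj, conj_e1 0]
      constructor
      · simp [conj_zero' _, mul_zero', zero_mul']
      · simp [mul_zero', zero_mul', one_mul', mul_neg', mul_one']
    rw [h1, h2, Ne, pmk_inj]
    rintro ⟨-, h⟩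
    exact e1_ne_zero 0 (eq_zero_of_eq_neg h)
  | n + 1 => by
    rw [e1_succ, e2_succ, pmk_mul, pmk_mul, Ne, pmk_inj, conj_zero']
    simp only [mul_zero', zero_mul', sub_zero, add_zero, conj_e1, conj_e2, mul_neg']
    rintro ⟨h, -⟩
    exact noncomm n h

end CD
namespace CD

lemma pmk_fst {n} (a b : CD n) : (pmk a b).1 = a := rfl
lemma pmk_snd {n} (a b : CD n) : (pmk a b).2 = b := rfl
lemma pmk_sub {n} (a b c d : CD n) : pmk a b - pmk c d = pmk (a - c) (b - d) := rfl

lemma smul_one_cd0 (r : ℝ) : r • (1 : CD 0) = r := mul_one r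

lemma smul_one_pmk {n} (r : ℝ) : (r • 1 : CD (n+1)) = pmk (r • 1) 0 := by
  rw [one_pmk, pmk_smul, smul_zero]

/-- The center of `CD (m+2)` is `ℝ`. -/
lemma center_real : ∀ m (w : CD (m+2)), (∀ x, w * x = x * w) → ∃ μ : ℝ, w = μ • 1
  | 0, w, hw => by
    have h1 := hw (e1 1)
    rw [← pmk_eta w, e1_succ, pmk_mul, pmk_mul, pmk_inj, conj_e1 0, conj_zero'] at h1
    simp only [mul_zero', zero_mul', mul_neg', neg_mul', sub_zero, zero_sub, add_zero,
      zero_add] at h1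
    have hw2 : w.2 = 0 := eq_zero_of_mul_e1 (eq_zero_of_eq_neg h1.2.symm)
    have h2 := hw (e2 0)
    rw [← pmk_eta w, hw2, e2_zero, pmk_mul, pmk_mul, pmk_inj, conj_zero', conj_one'] at h2
    simp only [mul_zero', zero_mul', mul_one', one_mul', sub_zero, zero_sub, add_zero,
      zero_add, neg_zero] at h2
    have h3 : w.1.2 = -w.1.2 := congrArg Prod.snd h2.2
    refine ⟨toR w.1.1, ?_⟩
    rw [smul_one_pmk, smul_one_pmk, smul_one_cd0, ← pmk_eta w, hw2, ← pmk_eta w.1,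
      eq_zero_of_eq_neg h3]
    rfl
  | m + 1, w, hw => by
    have key : ∀ c : CD (m+2), w.1 * c = c * w.1 ∧ w.2 * conj c = w.2 * c := by
      intro c
      have h := hw (pmk c 0)
      rw [← pmk_eta w, pmk_mul, pmk_mul, pmk_inj, conj_zero'] at h
      simp only [mul_zero', zero_mul', sub_zero, zero_add, add_zero] at h
      exact h
    obtain ⟨μ, hμ⟩ := center_real m w.1 fun c => (key c).1
    have hw2 : w.2 = 0 := by
      have := (key (e1 (m+1))).2
      rw [conj_e1, mul_neg'] at this
      exact eq_zero_of_mul_e1 (eq_zero_of_eq_neg this.symm)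
    refine ⟨μ, ?_⟩
    rw [smul_one_pmk, ← pmk_eta w, hμ, hw2]

/-- The middle nucleus of `CD (m+3)` is `ℝ`. -/
lemma midnuc (m : ℕ) (u : CD (m+3)) (hu : ∀ x y, (x * u) * y = x * (u * y)) :
    ∃ l : ℝ, u = l • 1 := by
  -- step 1 : u.2 is central in CD (m+2)
  have key : ∀ t c : CD (m+2), t * (u.2 * c) = c * (t * u.2) := by
    intro t c
    have h := hu (pmk c 0) (pmk 0 (conj t))
    rw [← pmk_eta u, pmk_mul, pmk_mul, pmk_mul, pmk_mul, pmk_inj] at h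
    have h1 := h.1
    rw [conj_zero', conj_conj'] at h1
    simp only [mul_zero', zero_mul', sub_zero, zero_sub, zero_add, add_zero, mul_neg',
      neg_mul', neg_inj] at h1
    exact h1
  have hcen : ∀ c : CD (m+2), u.2 * c = c * u.2 := by
    intro c
    have := key 1 c
    rwa [one_mul', one_mul'] at this
  obtain ⟨μ, hμ⟩ := center_real m u.2 hcen
  -- step 2 : μ = 0
  have hμ0 : μ = 0 := by
    by_contra h0
    have h := key (e1 (m+1)) (e2 m)
    simp only [hμ, smul_mul', mul_smul'', one_mul', mul_one'] at h
    have := congrArg (fun y => (μ⁻¹:ℝ) • y) h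
    simp only [smul_smul, inv_mul_cancel₀ h0, one_smul] at this
    exact noncomm m this
  have hu2 : u.2 = 0 := by rw [hμ, hμ0, zero_smul]
  -- step 3 : conj u.1 is central
  have key2 : ∀ s c : CD (m+2), s * (c * conj u.1) = (conj u.1 * s) * c := by
    intro s c
    have h := hu (pmk 0 c) (pmk 0 (conj s))
    rw [← pmk_eta u, hu2, pmk_mul, pmk_mul, pmk_mul, pmk_mul, pmk_inj] at h
    have h1 := h.1
    simp only [conj_conj', conj_zero', conj_mul', conj_add', conj_neg', mul_zero', zero_mul',
      sub_zero, zero_sub, zero_add, add_zero, mul_neg', neg_mul', neg_neg, neg_inj] at h1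
    exact h1
  have hcen2 : ∀ c : CD (m+2), c * conj u.1 = conj u.1 * c := by
    intro c
    have := key2 1 c
    rwa [one_mul', mul_one'] at this
  obtain ⟨l, hl⟩ := center_real m (conj u.1) fun c => (hcen2 c).symm
  have hu1 : u.1 = l • 1 := by
    have := congrArg conj hl
    rwa [conj_conj', conj_smul', conj_one'] at this
  exact ⟨l, by rw [smul_one_pmk, ← pmk_eta u, hu1, hu2]⟩
end CD
namespace CD
lemma pmk_eq_zero {n} {a b : CD n} : pmk a b = 0 ↔ a = 0 ∧ b = 0 :=
  ⟨fun h => ⟨congrArg Prod.fst h, congrArg Prod.snd h⟩, fun h => by rw [h.1, h.2]; rfl⟩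
end CD
namespace CD

lemma assoc_real_left {n} (r : ℝ) (y z : CD n) : assoc (r • 1) y z = 0 := by
  simp only [assoc, smul_mul', one_mul', sub_self]

lemma assoc_real_right {n} (x y : CD n) (r : ℝ) : assoc x y (r • 1) = 0 := by
  simp only [assoc, mul_smul'', mul_one', sub_self]

lemma assoc_add_left {n} (x x' y z : CD n) :
    assoc (x + x') y z = assoc x y z + assoc x' y z := by
  simp only [assoc, add_mul']; abel

lemma assoc_add_right {n} (x y z z' : CD n) :
    assoc x y (z + z') = assoc x y z + assoc x y z' := by
  simp only [assoc, mul_add']; abel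

lemma pure_decomp {n} (x : CD n) : ∃ (r : ℝ) (p : CD n), conj p = -p ∧ x = r • 1 + p := by
  obtain ⟨s, hs⟩ := exists_real_add_conj n x
  refine ⟨2⁻¹ * s, x - (2⁻¹ * s) • 1, ?_, by abel⟩
  rw [conj_sub', conj_smul', conj_one']
  have hcx : conj x = s • 1 - x := by rw [← hs]; abel
  rw [hcx, neg_sub]
  have hh : s • (1 : CD n) = (2⁻¹ * s) • 1 + (2⁻¹ * s) • 1 := by
    rw [← add_smul]; norm_num; ring_nf
  rw [hh]; abel

lemma midnuc_of_pure (m : ℕ) (u : CD (m+3))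
    (h : ∀ c d : CD (m+3), conj c = -c → conj d = -d → assoc d u c = 0) :
    ∃ l : ℝ, u = l • 1 := by
  apply midnuc
  intro x y
  have hxy : assoc x u y = 0 := by
    obtain ⟨r, p, hhp, hx⟩ := pure_decomp x
    obtain ⟨s, q, hhq, hy⟩ := pure_decomp y
    rw [hx, hy]
    simp only [assoc_add_left, assoc_add_right, assoc_real_left, assoc_real_right,
      h q p hhq hhp, add_zero, zero_add]
  simp only [assoc] at hxy
  exact sub_eq_zero.mp hxy

end CD

set_option maxHeartbeats 1000000

/-- For `n ≥ 3`, a pure strongly alternative element of `A (n+1)`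
is a real multiple of `ẽ₀`. -/
theorem pure_stronglyAlternative_eq_smul_etilde (n : ℕ) (hn : 3 ≤ n) (α : CD (n + 1))
    (hp : CD.IsPure α) (hsa : CD.IsStronglyAlternative α) :
    ∃ l : ℝ, α = l • CD.etilde n := by
  obtain ⟨m, rfl⟩ : ∃ m, n = m + 3 := ⟨n - 3, by omega⟩
  obtain ⟨h1, h2⟩ := hsa
  have hlin : ∀ x y : CD (m+3+1), CD.assoc α x y + CD.assoc α y x = 0 := by
    intro x y
    have key : CD.assoc α x x + (CD.assoc α x y + CD.assoc α y x) + CD.assoc α y y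
        = CD.assoc α (x + y) (x + y) := by
      simp only [CD.assoc, CD.mul_add', CD.add_mul']
      abel
    rw [h2 (x + y), h2 x, h2 y, zero_add, add_zero] at key
    exact key
  have ha : CD.conj α.1 = -α.1 := congrArg Prod.fst hp
  have hrel : ∀ c d : CD (m+3), CD.conj c = -c → CD.conj d = -d →
      CD.assoc d α.1 c = 0 ∧ CD.assoc d α.2 c = 0 := by
    intro c d hc hd
    have h := hlin (CD.pmk c 0) (CD.pmk 0 d)
    rw [← CD.pmk_eta α] at h
    simp only [CD.assoc, CD.pmk_mul, CD.pmk_add, CD.pmk_sub, CD.conj_zero', CD.conj_mul',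
      CD.conj_neg', hc, hd, ha, CD.mul_zero', CD.zero_mul', CD.mul_neg', CD.neg_mul',
      neg_neg, sub_zero, zero_sub, add_zero, zero_add, CD.pmk_eq_zero] at h
    constructor
    · simp only [CD.assoc]
      rw [← neg_eq_zero]
      have h2c := h.2
      abel_nf at h2c ⊢
      exact h2c
    · simp only [CD.assoc]
      have h1c := h.1
      abel_nf at h1c ⊢
      exact h1c
  obtain ⟨la, hla⟩ := CD.midnuc_of_pure m α.1 (fun c d hc hd => (hrel c d hc hd).1)
  obtain ⟨lb, hlb⟩ := CD.midnuc_of_pure m α.2 (fun c d hc hd => (hrel c d hc hd).2)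
  have ha0 : α.1 = 0 := by
    rw [hla] at ha
    rw [CD.conj_smul', CD.conj_one'] at ha
    rw [hla, CD.eq_zero_of_eq_neg ha]
  refine ⟨lb, ?_⟩
  rw [← CD.pmk_eta α, ha0, hlb,
    show CD.etilde (m+3) = CD.pmk (0 : CD (m+3)) 1 from rfl, CD.pmk_smul, smul_zero]
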